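/- In a CFI-gadget of degree d, every inner vertex has exactly one neighbor in each of the d outer pairs, and the automorphisms of the gadget fixing the gadget setwise and preserving the colored partition correspond exactly to the even-weight vectors in F_2^d: each automorphism twists an even number of the d outer pairs. In particular, the color-preserving automorphism group of the gadget is isomorphic to the subgroup {x ∈ F_2^d : Σx = 0} of F_2^d, and is abelian of order 2^{d−1}. -/

import Mathlib

open SimpleGraph

/-- Inner vertices of the degree-`d` CFI-gadget: even-weight vectors of `F₂^d`. -/
abbrev InnerV (d : ℕ) := {x : Fin d → ZMod 2 // ∑ i, x i = 0}

/-- Vertices of the degree-`d` CFI-gadget. -/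
abbrev GadgetV (d : ℕ) := InnerV d ⊕ (Fin d × ZMod 2)

/-- The degree-`d` CFI-gadget: inner vertex `x` is adjacent to outer vertex `(e, i)` iff
`x e = i`. -/
def Gadget (d : ℕ) : SimpleGraph (GadgetV d) :=
  SimpleGraph.fromRel (fun a b =>
    match a, b with
    | Sum.inl x, Sum.inr (e, i) => x.val e = i
    | _, _ => False)

/-- The coloring of the gadget: the inner vertices form one color class and each outer
pair `{(e,0),(e,1)}` forms one color class. -/
def gadgetColor {d : ℕ} : GadgetV d → Option (Fin d)
  | Sum.inl _ => none
  | Sum.inr (e, _) => some e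

section Aux

variable {d : ℕ}

lemma adj_lr (x : InnerV d) (e : Fin d) (i : ZMod 2) :
    (Gadget d).Adj (Sum.inl x) (Sum.inr (e, i)) ↔ x.val e = i := by
  simp [Gadget, fromRel_adj]

lemma adj_ll (x x' : InnerV d) :
    ¬ (Gadget d).Adj (Sum.inl x) (Sum.inl x') := by simp [Gadget, fromRel_adj]

lemma adj_rr (p q : Fin d × ZMod 2) :
    ¬ (Gadget d).Adj (Sum.inr p) (Sum.inr q) := by simp [Gadget, fromRel_adj]

lemma adj_rl (x : InnerV d) (e : Fin d) (i : ZMod 2) :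
    (Gadget d).Adj (Sum.inr (e, i)) (Sum.inl x) ↔ x.val e = i := by
  rw [SimpleGraph.adj_comm]; exact adj_lr x e i

lemma z2_add_self (a : ZMod 2) : a + a = 0 := by fin_cases a <;> rfl

/-- The underlying map of the twist automorphism. -/
def twF (y : InnerV d) : GadgetV d → GadgetV d
  | Sum.inl x => Sum.inl ⟨x.val + y.val, by
      simp only [Pi.add_apply]
      rw [Finset.sum_add_distrib, x.prop, y.prop, add_zero]⟩
  | Sum.inr (e, i) => Sum.inr (e, i + y.val e)

lemma twF_invol (y : InnerV d) (a : GadgetV d) : twF y (twF y a) = a := by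
  rcases a with ⟨x, hx⟩ | ⟨e, i⟩
  · simp only [twF, Sum.inl.injEq, Subtype.mk.injEq]
    funext j; simp [add_assoc, z2_add_self]
  · simp only [twF, Sum.inr.injEq, Prod.mk.injEq, true_and]
    simp [add_assoc, z2_add_self]

/-- The twist automorphism associated with an even-weight vector `y`. -/
def twist (y : InnerV d) : Gadget d ≃g Gadget d where
  toFun := twF y
  invFun := twF y
  left_inv := twF_invol y
  right_inv := twF_invol y
  map_rel_iff' := by
    rintro (x | ⟨e, i⟩) (x' | ⟨e', i'⟩)
    · simp [twF, adj_ll]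
    · simp only [Equiv.coe_fn_mk, twF, adj_lr]
      constructor
      · intro h; have := congrArg (· + y.val e') h; simpa [add_assoc, z2_add_self] using this
      · intro h; simp [Pi.add_apply, h]
    · simp only [Equiv.coe_fn_mk, twF, adj_rl]
      constructor
      · intro h; have := congrArg (· + y.val e) h; simpa [add_assoc, z2_add_self] using this
      · intro h; simp [Pi.add_apply, h]
    · simp [twF, adj_rr]

lemma twist_color (y : InnerV d) (a : GadgetV d) :
    gadgetColor (twist y a) = gadgetColor a := by
  rcases a with x | ⟨e, i⟩ <;> rfl

/-- Every color-preserving automorphism acts by a translation by an even-weight vector. -/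
lemma char_aux (φ : Gadget d ≃g Gadget d) (hc : ∀ a, gadgetColor (φ a) = gadgetColor a) :
    ∃ y : InnerV d,
      (∀ x : InnerV d, ∃ x' : InnerV d,
          φ (Sum.inl x) = Sum.inl x' ∧ x'.val = x.val + y.val) ∧
      (∀ (e : Fin d) (i : ZMod 2), φ (Sum.inr (e, i)) = Sum.inr (e, i + y.val e)) := by
  -- outer vertices go to outer vertices in the same pair
  have hout : ∀ (e : Fin d) (i : ZMod 2), ∃ j, φ (Sum.inr (e, i)) = Sum.inr (e, j) := by
    intro e i
    have h := hc (Sum.inr (e, i))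
    rcases hφ : φ (Sum.inr (e, i)) with x | ⟨e', j⟩
    · rw [hφ] at h; simp [gadgetColor] at h
    · rw [hφ] at h; simp [gadgetColor] at h; exact ⟨j, by rw [h]⟩
  have hin : ∀ x : InnerV d, ∃ x', φ (Sum.inl x) = Sum.inl x' := by
    intro x
    have h := hc (Sum.inl x)
    rcases hφ : φ (Sum.inl x) with x' | ⟨e', j⟩
    · exact ⟨x', rfl⟩
    · rw [hφ] at h; simp [gadgetColor] at h
  -- the flip vector
  choose c hcspec using fun e => hout e 0
  -- φ on outer vertices
  have houter : ∀ (e : Fin d) (i : ZMod 2), φ (Sum.inr (e, i)) = Sum.inr (e, i + c e) := by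
    intro e i
    rcases (by fin_cases i; exacts [Or.inl rfl, Or.inr rfl] : i = 0 ∨ i = 1) with rfl | rfl
    · simpa using hcspec e
    · obtain ⟨j, hj⟩ := hout e 1
      have hne : j ≠ c e := by
        intro hh
        have : φ (Sum.inr (e, (1:ZMod 2))) = φ (Sum.inr (e, (0:ZMod 2))) := by
          rw [hj, hcspec e, hh]
        have := φ.toEquiv.injective this
        simp at this
      have key : ∀ j u : ZMod 2, j ≠ u → j = 1 + u := by decide
      rw [hj, key j (c e) hne]
  -- φ on inner vertices
  have hinner : ∀ x : InnerV d, ∃ x', φ (Sum.inl x) = Sum.inl x' ∧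
      x'.val = x.val + fun e => c e := by
    intro x
    obtain ⟨x', hx'⟩ := hin x
    refine ⟨x', hx', ?_⟩
    funext e
    have hadj : (Gadget d).Adj (Sum.inl x) (Sum.inr (e, x.val e)) := (adj_lr x e _).2 rfl
    have := φ.map_rel_iff.2 hadj
    rw [hx', houter] at this
    have := (adj_lr x' e _).1 this
    simpa using this
  obtain ⟨x0, hx0, hx0v⟩ := hinner ⟨0, by simp⟩
  have hcsum : ∑ e, c e = 0 := by
    have := x0.prop
    rw [hx0v] at this
    simpa using this
  exact ⟨⟨fun e => c e, hcsum⟩, hinner, houter⟩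

/-- `InnerV (n+1)` is equivalent to `F₂^n`. -/
def innerEquiv (n : ℕ) : InnerV (n + 1) ≃ (Fin n → ZMod 2) where
  toFun x := fun i => x.val i.castSucc
  invFun g := ⟨Fin.lastCases (∑ i, g i) g, by
    rw [Fin.sum_univ_castSucc]
    simp [z2_add_self]⟩
  left_inv := by
    rintro ⟨x, hx⟩
    ext j
    refine Fin.lastCases ?_ ?_ j
    · simp only [Fin.lastCases_last]
      rw [Fin.sum_univ_castSucc] at hx
      have := congrArg (· + x (Fin.last n)) hx
      simpa [add_assoc, z2_add_self] using this
    · intro i; simp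
  right_inv := by intro g; funext i; simp

lemma card_inner (d : ℕ) (hd : 1 ≤ d) : Fintype.card (InnerV d) = 2 ^ (d - 1) := by
  obtain ⟨n, rfl⟩ := Nat.exists_eq_add_of_le' hd
  rw [Fintype.card_congr (innerEquiv n)]
  simp [ZMod.card]

end Aux

/-- In the degree-`d` CFI-gadget: every inner vertex has exactly one neighbor in each of
the `d` outer pairs; the color-preserving automorphisms correspond exactly to the
even-weight vectors `y ∈ F₂^d`, acting by translation on the inner vertices and by
flipping the outer pairs `e` with `y e = 1`; consequently the color-preserving
automorphism group is abelian of order `2^(d-1)`. -/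
theorem stmt12 (d : ℕ) (hd : 1 ≤ d) :
    (∀ (x : InnerV d) (e : Fin d), ∃! i : ZMod 2,
        (Gadget d).Adj (Sum.inl x) (Sum.inr (e, i))) ∧
    (∀ φ : Gadget d ≃g Gadget d, (∀ a, gadgetColor (φ a) = gadgetColor a) →
      ∃! y : InnerV d,
        (∀ x : InnerV d, ∃ x' : InnerV d,
            φ (Sum.inl x) = Sum.inl x' ∧ x'.val = x.val + y.val) ∧
        (∀ (e : Fin d) (i : ZMod 2), φ (Sum.inr (e, i)) = Sum.inr (e, i + y.val e))) ∧
    (∀ y : InnerV d, ∃ φ : Gadget d ≃g Gadget d,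
        (∀ a, gadgetColor (φ a) = gadgetColor a) ∧
        (∀ x : InnerV d, ∃ x' : InnerV d,
            φ (Sum.inl x) = Sum.inl x' ∧ x'.val = x.val + y.val) ∧
        (∀ (e : Fin d) (i : ZMod 2), φ (Sum.inr (e, i)) = Sum.inr (e, i + y.val e))) ∧
    (∀ φ ψ : Gadget d ≃g Gadget d, (∀ a, gadgetColor (φ a) = gadgetColor a) →
        (∀ a, gadgetColor (ψ a) = gadgetColor a) → ∀ a, φ (ψ a) = ψ (φ a)) ∧
    Fintype.card (InnerV d) = 2 ^ (d - 1) := by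
  refine ⟨?_, ?_, ?_, ?_, card_inner d hd⟩
  · -- unique neighbor in each pair
    intro x e
    refine ⟨x.val e, (adj_lr x e _).2 rfl, fun i hi => ((adj_lr x e i).1 hi).symm⟩
  · -- characterization with uniqueness
    intro φ hc
    obtain ⟨y, hy1, hy2⟩ := char_aux φ hc
    refine ⟨y, ⟨hy1, hy2⟩, ?_⟩
    rintro z ⟨hz1, hz2⟩
    apply Subtype.ext
    funext e
    have h1 := hy2 e 0
    have h2 := hz2 e 0
    rw [h2] at h1
    simpa using (Sum.inr.inj h1 : ((e, 0 + z.val e) : Fin d × ZMod 2) = (e, 0 + y.val e))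
  · -- realization
    intro y
    exact ⟨twist y, twist_color y,
      fun x => ⟨⟨x.val + y.val, by
        simp only [Pi.add_apply]
        rw [Finset.sum_add_distrib, x.prop, y.prop, add_zero]⟩, rfl, rfl⟩,
      fun e i => rfl⟩
  · -- commutativity
    intro φ ψ hφ hψ a
    obtain ⟨y, hy1, hy2⟩ := char_aux φ hφ
    obtain ⟨z, hz1, hz2⟩ := char_aux ψ hψ
    rcases a with x | ⟨e, i⟩
    · obtain ⟨x1, hx1, hx1v⟩ := hz1 x
      obtain ⟨x2, hx2, hx2v⟩ := hy1 x1
      obtain ⟨x3, hx3, hx3v⟩ := hy1 x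
      obtain ⟨x4, hx4, hx4v⟩ := hz1 x3
      rw [hx1, hx2, hx3, hx4]
      congr 1
      apply Subtype.ext
      rw [hx2v, hx1v, hx4v, hx3v]
      ring
    · rw [hz2, hy2, hy2, hz2]
      congr 2
      ring
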